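/- arXiv:2108.07406 — 2 statements merged into one kernel-verified Lean document; each statement's English description precedes it below -/
import Mathlib

section
/- Let n ≥ 1, α > 0, μ > 0, L ≥ 0, and let f : ℝⁿ → ℝ be L-smooth. Then for every p ∈ ℝⁿ, ‖∇f(p) − ∫ (n/(2α²μ))·(f(p + μ•v) − f(p − μ•v)) • v dσ_α(v)‖ ≤ L·n·α·μ/2, where the integral is over v drawn from the uniform probability measure σ_α on the origin-centered sphere of radius α. -/
open MeasureTheory


noncomputable def negCoordLM (n : ℕ) (j : Fin n) :
    EuclideanSpace ℝ (Fin n) →ₗ[ℝ] EuclideanSpace ℝ (Fin n) where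
  toFun v := WithLp.toLp 2 (fun k => if k = j then -v k else v k)
  map_add' v w := by
    ext k; by_cases h : k = j <;> simp [h, PiLp.add_apply] <;> ring
  map_smul' c v := by
    ext k; by_cases h : k = j <;> simp [h, PiLp.smul_apply, smul_eq_mul] <;> ring

noncomputable def negCoord (n : ℕ) (j : Fin n) :
    EuclideanSpace ℝ (Fin n) ≃ₗᵢ[ℝ] EuclideanSpace ℝ (Fin n) where
  toLinearEquiv := LinearEquiv.ofInvolutive (negCoordLM n j) (by
    intro v; ext k; by_cases h : k = j <;> simp [negCoordLM, h])
  norm_map' v := by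
    simp only [LinearEquiv.coe_ofInvolutive]
    rw [EuclideanSpace.norm_eq, EuclideanSpace.norm_eq]
    congr 1
    apply Finset.sum_congr rfl
    intro k _
    by_cases h : k = j <;> simp [negCoordLM, h]

lemma negCoord_apply (n : ℕ) (j : Fin n) (v : EuclideanSpace ℝ (Fin n)) (k : Fin n) :
    negCoord n j v k = if k = j then -v k else v k := rfl

variable {n : ℕ}

lemma norm_sq_eq'' (v : EuclideanSpace ℝ (Fin n)) : ‖v‖^2 = ∑ i, (v i)^2 := by
  rw [EuclideanSpace.norm_eq, Real.sq_sqrt (by positivity)]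
  simp [sq_abs]

lemma abs_apply_le' (v : EuclideanSpace ℝ (Fin n)) (i : Fin n) : |v i| ≤ ‖v‖ := by
  have h1 : (v i)^2 ≤ ‖v‖^2 := by
    rw [norm_sq_eq'']
    exact Finset.single_le_sum (f := fun k => (v k)^2) (fun k _ => sq_nonneg _) (Finset.mem_univ i)
  nlinarith [abs_nonneg (v i), norm_nonneg v, sq_abs (v i)]

lemma cont_apply (i : Fin n) : Continuous (fun v : EuclideanSpace ℝ (Fin n) => v i) :=
  (EuclideanSpace.proj i : EuclideanSpace ℝ (Fin n) →L[ℝ] ℝ).continuous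

lemma integrable_coord (α : ℝ) (σ : Measure (EuclideanSpace ℝ (Fin n))) [IsProbabilityMeasure σ]
    (hσ_sphere : ∀ᵐ v ∂σ, ‖v‖ = α) (i j : Fin n) :
    Integrable (fun v : EuclideanSpace ℝ (Fin n) => v i * v j) σ := by
  apply Integrable.mono' (integrable_const (α^2))
    (((cont_apply i).mul (cont_apply j)).aestronglyMeasurable)
  filter_upwards [hσ_sphere] with v hv
  rw [Real.norm_eq_abs, Pi.mul_apply, abs_mul]
  calc |v i| * |v j| ≤ ‖v‖ * ‖v‖ :=
        mul_le_mul (abs_apply_le' v i) (abs_apply_le' v j) (abs_nonneg _) (norm_nonneg _)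
    _ = α^2 := by rw [hv]; ring

lemma int_map_eq (σ : Measure (EuclideanSpace ℝ (Fin n)))
    (hσ_rot : ∀ R : EuclideanSpace ℝ (Fin n) ≃ₗᵢ[ℝ] EuclideanSpace ℝ (Fin n), Measure.map R σ = σ)
    (R : EuclideanSpace ℝ (Fin n) ≃ₗᵢ[ℝ] EuclideanSpace ℝ (Fin n))
    (φ : EuclideanSpace ℝ (Fin n) → ℝ) (hφ : AEStronglyMeasurable φ σ) :
    ∫ v, φ v ∂σ = ∫ v, φ (R v) ∂σ := by
  conv_lhs => rw [← hσ_rot R]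
  exact integral_map R.continuous.measurable.aemeasurable (by rwa [hσ_rot R])

lemma moment_offdiag (σ : Measure (EuclideanSpace ℝ (Fin n)))
    (hσ_rot : ∀ R : EuclideanSpace ℝ (Fin n) ≃ₗᵢ[ℝ] EuclideanSpace ℝ (Fin n), Measure.map R σ = σ)
    (i j : Fin n) (hij : i ≠ j) :
    ∫ v, v i * v j ∂σ = 0 := by
  have := int_map_eq σ hσ_rot (negCoord n j) (fun v => v i * v j)
    (((cont_apply i).mul (cont_apply j)).aestronglyMeasurable)
  have heq : ∀ v : EuclideanSpace ℝ (Fin n), (negCoord n j v) i * (negCoord n j v) j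
      = -(v i * v j) := by
    intro v
    rw [negCoord_apply, negCoord_apply, if_neg hij, if_pos rfl]
    ring
  simp only [heq] at this
  rw [integral_neg] at this
  linarith

lemma moment_diag_eq (σ : Measure (EuclideanSpace ℝ (Fin n)))
    (hσ_rot : ∀ R : EuclideanSpace ℝ (Fin n) ≃ₗᵢ[ℝ] EuclideanSpace ℝ (Fin n), Measure.map R σ = σ)
    (i j : Fin n) :
    ∫ v, (v i)^2 ∂σ = ∫ v, (v j)^2 ∂σ := by
  have := int_map_eq σ hσ_rot (LinearIsometryEquiv.piLpCongrLeft 2 ℝ ℝ (Equiv.swap i j))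
    (fun v => (v i)^2) (((cont_apply i).pow 2).aestronglyMeasurable)
  rw [this]
  refine integral_congr_ae (Filter.Eventually.of_forall fun v => ?_)
  show (v ((Equiv.swap i j).symm i))^2 = (v j)^2
  rw [Equiv.symm_swap, Equiv.swap_apply_left]

lemma moment_diag (hn : 1 ≤ n) (α : ℝ) (σ : Measure (EuclideanSpace ℝ (Fin n)))
    [IsProbabilityMeasure σ] (hσ_sphere : ∀ᵐ v ∂σ, ‖v‖ = α)
    (hσ_rot : ∀ R : EuclideanSpace ℝ (Fin n) ≃ₗᵢ[ℝ] EuclideanSpace ℝ (Fin n), Measure.map R σ = σ)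
    (i : Fin n) : ∫ v, (v i)^2 ∂σ = α^2 / n := by
  have hsum : ∑ j, ∫ v, (v j)^2 ∂σ = α^2 := by
    rw [← integral_finset_sum _ (fun j _ => by
      simpa [pow_two] using integrable_coord α σ hσ_sphere j j)]
    have hae : ∀ᵐ v ∂σ, ∑ j, (v j)^2 = α^2 := by
      filter_upwards [hσ_sphere] with v hv
      rw [← norm_sq_eq'', hv]
    rw [integral_congr_ae hae]
    simp
  have hall : ∀ j, ∫ v, (v j)^2 ∂σ = ∫ v, (v i)^2 ∂σ := fun j => moment_diag_eq σ hσ_rot j i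
  rw [Finset.sum_congr rfl (fun j _ => hall j), Finset.sum_const] at hsum
  simp only [Finset.card_univ, Fintype.card_fin, nsmul_eq_mul] at hsum
  have hn0 : (n : ℝ) ≠ 0 := by positivity
  field_simp
  linarith

lemma second_moment (hn : 1 ≤ n) (α : ℝ) (hα : 0 < α) (σ : Measure (EuclideanSpace ℝ (Fin n)))
    [IsProbabilityMeasure σ] (hσ_sphere : ∀ᵐ v ∂σ, ‖v‖ = α)
    (hσ_rot : ∀ R : EuclideanSpace ℝ (Fin n) ≃ₗᵢ[ℝ] EuclideanSpace ℝ (Fin n), Measure.map R σ = σ)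
    (g : EuclideanSpace ℝ (Fin n)) :
    ∫ v, (inner ℝ g v : ℝ) • v ∂σ = (α^2 / n) • g := by
  have hint : Integrable (fun v : EuclideanSpace ℝ (Fin n) => (inner ℝ g v : ℝ) • v) σ := by
    apply Integrable.mono' (integrable_const (‖g‖ * α * α))
      (by fun_prop : Continuous fun v : EuclideanSpace ℝ (Fin n) => (inner ℝ g v : ℝ) • v).aestronglyMeasurable
    filter_upwards [hσ_sphere] with v hv
    rw [norm_smul]
    calc ‖(inner ℝ g v : ℝ)‖ * ‖v‖ ≤ (‖g‖ * ‖v‖) * ‖v‖ :=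
          mul_le_mul_of_nonneg_right (norm_inner_le_norm g v) (norm_nonneg v)
      _ = ‖g‖ * α * α := by rw [hv]
  have hcomp : ∀ j : Fin n, (∫ v, (inner ℝ g v : ℝ) • v ∂σ) j = α^2 / n * g j := by
    intro j
    have h1 : (∫ v, (inner ℝ g v : ℝ) • v ∂σ) j
        = ∫ v, (inner ℝ g v : ℝ) * v j ∂σ := by
      have h := ((EuclideanSpace.proj j : EuclideanSpace ℝ (Fin n) →L[ℝ] ℝ).integral_comp_comm
        hint).symm
      exact h
    rw [h1]
    have h2 : ∀ v : EuclideanSpace ℝ (Fin n),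
        (inner ℝ g v : ℝ) * v j = ∑ i, g i * (v i * v j) := by
      intro v
      rw [show (inner ℝ g v : ℝ) = ∑ i, g i * v i by simp [PiLp.inner_apply, mul_comm], Finset.sum_mul]
      exact Finset.sum_congr rfl (fun i _ => by ring)
    simp only [h2]
    rw [integral_finset_sum _ (fun i _ => (integrable_coord α σ hσ_sphere i j).const_mul (g i))]
    simp only [integral_const_mul]
    rw [Finset.sum_eq_single j]
    · have hd := moment_diag hn α σ hσ_sphere hσ_rot j
      have : ∫ v, v j * v j ∂σ = α ^ 2 / n := by
        rw [← hd]
        exact integral_congr_ae (Filter.Eventually.of_forall fun v => (sq (v j)).symm)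
      rw [this]
      ring
    · intro i _ hij
      rw [moment_offdiag σ hσ_rot i j hij, mul_zero]
    · intro h; exact absurd (Finset.mem_univ j) h
  ext j
  rw [hcomp j]
  simp [smul_eq_mul]


lemma taylor_bound {n : ℕ} (f : EuclideanSpace ℝ (Fin n) → ℝ) (L : ℝ) (hL : 0 ≤ L)
    (hf_diff : Differentiable ℝ f)
    (hf_smooth : ∀ x y, ‖gradient f x - gradient f y‖ ≤ L * ‖x - y‖)
    (x h : EuclideanSpace ℝ (Fin n)) :
    |f (x + h) - f x - inner ℝ (gradient f x) h| ≤ L / 2 * ‖h‖ ^ 2 := by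
  have hgrad_cont : Continuous (gradient f) := by
    have : LipschitzWith L.toNNReal (gradient f) := by
      apply LipschitzWith.of_dist_le_mul
      intro a b
      calc dist (gradient f a) (gradient f b) = ‖gradient f a - gradient f b‖ := dist_eq_norm _ _
        _ ≤ L * ‖a - b‖ := hf_smooth a b
        _ ≤ L.toNNReal * dist a b := by
            rw [dist_eq_norm]
            exact mul_le_mul_of_nonneg_right (Real.le_coe_toNNReal L) (norm_nonneg _)
    exact this.continuous
  have hderiv : ∀ t : ℝ, HasDerivAt (fun t : ℝ => f (x + t • h))
      (inner ℝ (gradient f (x + t • h)) h : ℝ) t := by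
    intro t
    have hline : HasDerivAt (fun t : ℝ => x + t • h) h t := by
      simpa using ((hasDerivAt_id t).smul_const h).const_add x
    have hF : HasFDerivAt f (InnerProductSpace.toDual ℝ _ (gradient f (x + t • h))) (x + t • h) :=
      (hf_diff _).hasGradientAt.hasFDerivAt
    exact hF.comp_hasDerivAt t hline
  have hcont : Continuous fun t : ℝ => (inner ℝ (gradient f (x + t • h)) h : ℝ) := by
    exact (hgrad_cont.comp (by continuity)).inner continuous_const
  have hint : f (x + h) - f x = ∫ t in (0:ℝ)..1, (inner ℝ (gradient f (x + t • h)) h : ℝ) := by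
    have := intervalIntegral.integral_eq_sub_of_hasDerivAt (f := fun t : ℝ => f (x + t • h))
      (a := 0) (b := 1) (fun t _ => hderiv t) (hcont.intervalIntegrable 0 1)
    simp only [one_smul, zero_smul, add_zero] at this
    exact this.symm
  have hsplit : f (x + h) - f x - inner ℝ (gradient f x) h
      = ∫ t in (0:ℝ)..1, ((inner ℝ (gradient f (x + t • h)) h : ℝ) - inner ℝ (gradient f x) h) := by
    rw [intervalIntegral.integral_sub (hcont.intervalIntegrable 0 1)
      (intervalIntegrable_const), intervalIntegral.integral_const]
    rw [← hint]; ring_nf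
  rw [hsplit]
  have hbound : ∀ t ∈ Set.uIoc (0:ℝ) 1,
      ‖(inner ℝ (gradient f (x + t • h)) h : ℝ) - inner ℝ (gradient f x) h‖ ≤ L * ‖h‖^2 * t := by
    intro t ht
    rw [Set.uIoc_of_le zero_le_one] at ht
    have ht0 : 0 < t := ht.1
    have ht1 : t ≤ 1 := ht.2
    calc ‖(inner ℝ (gradient f (x + t • h)) h : ℝ) - inner ℝ (gradient f x) h‖
        = ‖(inner ℝ (gradient f (x + t • h) - gradient f x) h : ℝ)‖ := by
          rw [inner_sub_left]
      _ ≤ ‖gradient f (x + t • h) - gradient f x‖ * ‖h‖ := norm_inner_le_norm _ _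
      _ ≤ (L * ‖x + t • h - x‖) * ‖h‖ := by
          exact mul_le_mul_of_nonneg_right (hf_smooth _ _) (norm_nonneg _)
      _ = L * ‖h‖^2 * t := by
          have : x + t • h - x = t • h := by abel
          rw [this, norm_smul]
          simp [abs_of_pos ht0]; ring
  calc |∫ t in (0:ℝ)..1, ((inner ℝ (gradient f (x + t • h)) h : ℝ) - inner ℝ (gradient f x) h)|
      = ‖∫ t in (0:ℝ)..1, ((inner ℝ (gradient f (x + t • h)) h : ℝ) - inner ℝ (gradient f x) h)‖ :=
        (Real.norm_eq_abs _).symm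
    _ ≤ |∫ t in (0:ℝ)..1, L * ‖h‖^2 * t| := by
        refine (intervalIntegral.norm_integral_le_of_norm_le zero_le_one (g := fun t => L * ‖h‖^2 * t) ?_ ?_).trans (le_abs_self _)
        · exact Filter.Eventually.of_forall (fun t ht => hbound t (by rwa [Set.uIoc_of_le zero_le_one]))
        · exact (continuous_const.mul continuous_id).intervalIntegrable 0 1
    _ = L / 2 * ‖h‖ ^ 2 := by
        rw [intervalIntegral.integral_const_mul, integral_id]
        rw [abs_of_nonneg (by positivity)]
        ring


/-- For an `L`-smooth `f : ℝⁿ → ℝ`, the two-point zeroth-order gradient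
estimator `(n/(2α²μ))·(f(p+μv) − f(p−μv)) • v` has bias at most `Lnαμ/2` in norm, where
`v ∼ σ`, the uniform probability measure on the origin-centered sphere of radius `α`. -/
theorem gw_gradient_estimation_two_point
    (n : ℕ) (hn : 1 ≤ n) (α μ L : ℝ) (hα : 0 < α) (hμ : 0 < μ) (hL : 0 ≤ L)
    (σ : Measure (EuclideanSpace ℝ (Fin n))) [IsProbabilityMeasure σ]
    (hσ_sphere : ∀ᵐ v ∂σ, ‖v‖ = α)
    (hσ_rot : ∀ R : EuclideanSpace ℝ (Fin n) ≃ₗᵢ[ℝ] EuclideanSpace ℝ (Fin n),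
      Measure.map R σ = σ)
    (f : EuclideanSpace ℝ (Fin n) → ℝ)
    (hf_diff : Differentiable ℝ f)
    (hf_smooth : ∀ x y, ‖gradient f x - gradient f y‖ ≤ L * ‖x - y‖)
    (p : EuclideanSpace ℝ (Fin n)) :
    ‖gradient f p -
        ∫ v, ((n : ℝ) / (2 * α ^ 2 * μ) * (f (p + μ • v) - f (p - μ • v))) • v ∂σ‖
      ≤ L * n * α * μ / 2 := by
  set g := gradient f p with hg
  have hmom := second_moment hn α hα σ hσ_sphere hσ_rot g
  have hα0 : α ≠ 0 := ne_of_gt hα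
  have hμ0 : μ ≠ 0 := ne_of_gt hμ
  have hn0 : (n : ℝ) ≠ 0 := by
    have : (1 : ℝ) ≤ n := by exact_mod_cast hn
    linarith
  set lin : EuclideanSpace ℝ (Fin n) → EuclideanSpace ℝ (Fin n) :=
    fun v => ((n : ℝ) / α ^ 2 * (inner ℝ g v : ℝ)) • v with hlin
  set est : EuclideanSpace ℝ (Fin n) → EuclideanSpace ℝ (Fin n) :=
    fun v => ((n : ℝ) / (2 * α ^ 2 * μ) * (f (p + μ • v) - f (p - μ • v))) • v with hest
  have hintF : Integrable (fun v : EuclideanSpace ℝ (Fin n) => (inner ℝ g v : ℝ) • v) σ := by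
    apply Integrable.mono' (integrable_const (‖g‖ * α * α))
      (by fun_prop : Continuous fun v : EuclideanSpace ℝ (Fin n) => (inner ℝ g v : ℝ) • v).aestronglyMeasurable
    filter_upwards [hσ_sphere] with v hv
    rw [norm_smul]
    calc ‖(inner ℝ g v : ℝ)‖ * ‖v‖ ≤ (‖g‖ * ‖v‖) * ‖v‖ :=
          mul_le_mul_of_nonneg_right (norm_inner_le_norm g v) (norm_nonneg v)
      _ = ‖g‖ * α * α := by rw [hv]
  have hlin_eq2 : lin = fun v => ((n : ℝ) / α ^ 2) • ((inner ℝ g v : ℝ) • v) := by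
    funext v
    simp only [hlin]
    rw [mul_smul]
  have hlin_int : Integrable lin σ := by
    rw [hlin_eq2]
    exact hintF.smul ((n : ℝ) / α ^ 2)
  have hlin_eq : ∫ v, lin v ∂σ = g := by
    rw [hlin_eq2, integral_smul, hmom, smul_smul]
    have : (n : ℝ) / α ^ 2 * (α ^ 2 / n) = 1 := by field_simp
    rw [this, one_smul]
  have hdiff_bound : ∀ᵐ v ∂σ, ‖lin v - est v‖ ≤ L * n * α * μ / 2 := by
    filter_upwards [hσ_sphere] with v hv
    have hA := taylor_bound f L hL hf_diff hf_smooth p (μ • v)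
    have hB := taylor_bound f L hL hf_diff hf_smooth p (-(μ • v))
    rw [← hg] at hA hB
    have hnv : ‖μ • v‖ ^ 2 = μ ^ 2 * α ^ 2 := by
      rw [norm_smul, hv, Real.norm_eq_abs, abs_of_pos hμ, mul_pow]
    have hnv' : ‖-(μ • v)‖ ^ 2 = μ ^ 2 * α ^ 2 := by rw [norm_neg]; exact hnv
    rw [hnv] at hA
    rw [hnv'] at hB
    set A := f (p + μ • v) - f p - (inner ℝ g (μ • v) : ℝ) with hA_def
    set B := f (p + -(μ • v)) - f p - (inner ℝ g (-(μ • v)) : ℝ) with hB_def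
    have hpm : p - μ • v = p + -(μ • v) := sub_eq_add_neg p _
    have hscal : lin v - est v = ((n : ℝ) / (2 * α ^ 2 * μ) * (B - A)) • v := by
      simp only [hlin, hest]
      rw [← sub_smul]
      congr 1
      rw [hB_def, hA_def, hpm]
      rw [real_inner_smul_right, inner_neg_right, real_inner_smul_right]
      field_simp
      ring
    rw [hscal, norm_smul, hv, Real.norm_eq_abs]
    have hc : (0:ℝ) ≤ (n : ℝ) / (2 * α ^ 2 * μ) := by positivity
    have hAB : |B - A| ≤ L * μ ^ 2 * α ^ 2 := by
      calc |B - A| ≤ |B| + |A| := abs_sub _ _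
        _ ≤ L / 2 * (μ ^ 2 * α ^ 2) + L / 2 * (μ ^ 2 * α ^ 2) := add_le_add hB hA
        _ = L * μ ^ 2 * α ^ 2 := by ring
    calc |(n : ℝ) / (2 * α ^ 2 * μ) * (B - A)| * α
        = ((n : ℝ) / (2 * α ^ 2 * μ)) * |B - A| * α := by
          rw [abs_mul, abs_of_nonneg hc]
      _ ≤ ((n : ℝ) / (2 * α ^ 2 * μ)) * (L * μ ^ 2 * α ^ 2) * α := by
          apply mul_le_mul_of_nonneg_right _ (le_of_lt hα)
          exact mul_le_mul_of_nonneg_left hAB hc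
      _ = L * n * α * μ / 2 := by field_simp
  have hdiff_int : Integrable (fun v => lin v - est v) σ := by
    apply Integrable.mono' (integrable_const (L * n * α * μ / 2)) ?_ hdiff_bound
    have hclin : Continuous lin := by
      rw [hlin_eq2]
      exact (by fun_prop : Continuous fun v : EuclideanSpace ℝ (Fin n) => (inner ℝ g v : ℝ) • v).const_smul ((n : ℝ) / α ^ 2)
    have hcest : Continuous est := by
      rw [hest]
      apply Continuous.fun_smul _ continuous_id'
      apply Continuous.mul continuous_const
      apply Continuous.sub
      · exact hf_diff.continuous.comp (continuous_const.add (continuous_id.const_smul μ))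
      · exact hf_diff.continuous.comp (continuous_const.sub (continuous_id.const_smul μ))
    exact (hclin.sub hcest).aestronglyMeasurable
  have hest_int : Integrable est σ := by
    have h := hlin_int.sub hdiff_int
    have heq : est = (lin - fun v => lin v - est v) := by
      funext v
      simp [Pi.sub_apply]
    rw [heq]
    exact h
  have hLnonneg : (0:ℝ) ≤ L * n * α * μ / 2 := by positivity
  calc ‖g - ∫ v, est v ∂σ‖ = ‖∫ v, (lin v - est v) ∂σ‖ := by
        rw [integral_sub hlin_int hest_int, hlin_eq]
    _ ≤ (L * n * α * μ / 2) * (σ Set.univ).toReal :=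
        norm_integral_le_of_norm_le_const hdiff_bound
    _ = L * n * α * μ / 2 := by simp
end

section
/- Let n ≥ 1, α > 0, μ > 0, L ≥ 0, and let f : ℝⁿ → ℝ be L-smooth. Write g(v) = (n/(2α²μ))·(f(p + μ•v) − f(p − μ•v)) • v for p ∈ ℝⁿ. Then for v and w drawn independently from the uniform probability measure σ_α on the origin-centered sphere of radius α, ∫∫ ⟨g(v), g(w)⟩ dσ_α(v) dσ_α(w) ≤ ‖∇f(p)‖² + ‖∇f(p)‖·L·n^{3/2}·α·μ + L²·n³·α²·μ²/4. -/
open MeasureTheory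

-- quadratic upper bound for L-smooth functions
lemma smooth_quad_bound {n : ℕ} {L : ℝ} (hL : 0 ≤ L)
    (f : EuclideanSpace ℝ (Fin n) → ℝ) (hf_diff : Differentiable ℝ f)
    (hf_smooth : ∀ x y, ‖gradient f x - gradient f y‖ ≤ L * ‖x - y‖)
    (p h : EuclideanSpace ℝ (Fin n)) :
    |f (p + h) - f p - inner ℝ (gradient f p) h| ≤ L / 2 * ‖h‖ ^ 2 := by
  have hgc : Continuous (gradient f) := by
    refine LipschitzWith.continuous (K := ⟨L, hL⟩) ?_
    refine LipschitzWith.of_dist_le_mul fun x y => ?_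
    rw [dist_eq_norm, dist_eq_norm]; exact hf_smooth x y
  have hψ : ∀ t : ℝ, HasDerivAt (fun t : ℝ => p + t • h) h t := fun t => by
    simpa using ((hasDerivAt_id t).smul_const h).const_add p
  have hkey : ∀ t : ℝ, HasDerivAt (fun t : ℝ => f (p + t • h))
      (inner ℝ (gradient f (p + t • h)) h : ℝ) t := by
    intro t
    have h1 := ((hf_diff (p + t • h)).hasGradientAt.hasFDerivAt).comp_hasDerivAt t (hψ t)
    exact h1
  have hcont : Continuous fun t : ℝ => (inner ℝ (gradient f (p + t • h)) h : ℝ) :=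
    Continuous.inner (hgc.comp (continuous_const.add (continuous_id.smul continuous_const)))
      continuous_const
  have hFTC : ∫ t in (0:ℝ)..1, (inner ℝ (gradient f (p + t • h)) h : ℝ) = f (p + h) - f p := by
    have := intervalIntegral.integral_eq_sub_of_hasDerivAt (f := fun t : ℝ => f (p + t • h))
      (a := 0) (b := 1) (fun t _ => hkey t) (hcont.intervalIntegrable 0 1)
    simpa using this
  have heq : f (p + h) - f p - inner ℝ (gradient f p) h
      = ∫ t in (0:ℝ)..1,
          ((inner ℝ (gradient f (p + t • h)) h : ℝ) - inner ℝ (gradient f p) h) := by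
    rw [intervalIntegral.integral_sub (hcont.intervalIntegrable 0 1)
      (intervalIntegrable_const), hFTC]
    simp
  rw [heq]
  have hb : ∀ᵐ t ∂(volume.restrict (Set.uIoc (0:ℝ) 1)),
      ‖(inner ℝ (gradient f (p + t • h)) h : ℝ) - inner ℝ (gradient f p) h‖
        ≤ L * ‖h‖ ^ 2 * t := by
    refine (ae_restrict_iff' measurableSet_uIoc).2 (Filter.Eventually.of_forall fun t ht => ?_)
    rw [Set.uIoc_of_le (by norm_num)] at ht
    have ht0 : 0 < t := ht.1
    have h1 : (inner ℝ (gradient f (p + t • h)) h : ℝ) - inner ℝ (gradient f p) h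
        = inner ℝ (gradient f (p + t • h) - gradient f p) h := by
      rw [inner_sub_left]
    rw [h1]
    calc ‖(inner ℝ (gradient f (p + t • h) - gradient f p) h : ℝ)‖
        ≤ ‖gradient f (p + t • h) - gradient f p‖ * ‖h‖ := norm_inner_le_norm _ _
      _ ≤ (L * ‖p + t • h - p‖) * ‖h‖ := by
          exact mul_le_mul_of_nonneg_right (hf_smooth _ _) (norm_nonneg _)
      _ = L * ‖h‖ ^ 2 * t := by
          have : p + t • h - p = t • h := by abel
          rw [this, norm_smul, Real.norm_eq_abs, abs_of_pos ht0]
          ring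
  have hgi : IntervalIntegrable (fun t : ℝ => L * ‖h‖ ^ 2 * t) volume 0 1 :=
    (continuous_const.mul continuous_id).intervalIntegrable 0 1
  calc |∫ t in (0:ℝ)..1,
        ((inner ℝ (gradient f (p + t • h)) h : ℝ) - inner ℝ (gradient f p) h)|
      ≤ |∫ t in (0:ℝ)..1, L * ‖h‖ ^ 2 * t| :=
        ((intervalIntegral.norm_integral_le_of_norm_le (by norm_num)
          ((ae_restrict_iff' measurableSet_Ioc).1 (by rw [Set.uIoc_of_le zero_le_one] at hb; exact hb)) hgi)).trans (le_abs_self _)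
    _ = L / 2 * ‖h‖ ^ 2 := by
        rw [intervalIntegral.integral_const_mul, integral_id]
        rw [abs_of_nonneg (by positivity)]
        ring

lemma integrable_of_cont_bound {n : ℕ} {α : ℝ} {E : Type*} [NormedAddCommGroup E]
    (σ : Measure (EuclideanSpace ℝ (Fin n))) [IsProbabilityMeasure σ]
    (hσ_sphere : ∀ᵐ v ∂σ, ‖v‖ = α)
    (F : EuclideanSpace ℝ (Fin n) → E) (hF : Continuous F)
    (C : ℝ) (hC : ∀ v : EuclideanSpace ℝ (Fin n), ‖v‖ = α → ‖F v‖ ≤ C) :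
    Integrable F σ :=
  ⟨hF.aestronglyMeasurable, HasFiniteIntegral.of_bounded (hσ_sphere.mono fun v hv => hC v hv)⟩

lemma coord_abs_le_norm {n : ℕ} (v : EuclideanSpace ℝ (Fin n)) (i : Fin n) :
    |v i| ≤ ‖v‖ := by
  rw [EuclideanSpace.norm_eq, ← Real.sqrt_sq_eq_abs]
  refine Real.sqrt_le_sqrt ?_
  have h1 : v i ^ 2 ≤ ∑ k, ‖v k‖ ^ 2 := by
    have := Finset.single_le_sum (f := fun k => ‖v k‖ ^ 2)
      (fun k _ => by positivity) (Finset.mem_univ i)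
    simpa [Real.norm_eq_abs, sq_abs] using this
  exact h1

lemma sphere_second_moment {n : ℕ} (hn : 1 ≤ n) {α : ℝ} (hα : 0 < α)
    (σ : Measure (EuclideanSpace ℝ (Fin n))) [IsProbabilityMeasure σ]
    (hσ_sphere : ∀ᵐ v ∂σ, ‖v‖ = α)
    (hσ_rot : ∀ R : EuclideanSpace ℝ (Fin n) ≃ₗᵢ[ℝ] EuclideanSpace ℝ (Fin n),
      Measure.map R σ = σ)
    (u : EuclideanSpace ℝ (Fin n)) :
    ∫ v, (inner ℝ u v : ℝ) • v ∂σ = (α ^ 2 / n) • u := by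
  have hcoord : ∀ i : Fin n, Continuous fun v : EuclideanSpace ℝ (Fin n) => v i :=
    fun i => (EuclideanSpace.proj i : EuclideanSpace ℝ (Fin n) →L[ℝ] ℝ).continuous
  have hijcont : ∀ i j : Fin n,
      Continuous fun v : EuclideanSpace ℝ (Fin n) => v i * v j :=
    fun i j => (hcoord i).mul (hcoord j)
  have hijint : ∀ i j : Fin n,
      Integrable (fun v : EuclideanSpace ℝ (Fin n) => v i * v j) σ := by
    intro i j
    refine integrable_of_cont_bound σ hσ_sphere _ (hijcont i j) (α * α) fun v hv => ?_
    have h1 := coord_abs_le_norm v i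
    have h2 := coord_abs_le_norm v j
    rw [hv] at h1 h2
    rw [Real.norm_eq_abs, abs_mul]
    exact mul_le_mul h1 h2 (abs_nonneg _) hα.le
  -- off-diagonal moments vanish
  have hoff : ∀ i j : Fin n, i ≠ j → ∫ v, v i * v j ∂σ = 0 := by
    intro i j hij
    set R : EuclideanSpace ℝ (Fin n) ≃ₗᵢ[ℝ] EuclideanSpace ℝ (Fin n) :=
      LinearIsometryEquiv.piLpCongrRight 2
        (fun k : Fin n => if k = j then LinearIsometryEquiv.neg ℝ (E := ℝ)
          else LinearIsometryEquiv.refl ℝ ℝ) with hR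
    have hRapp : ∀ (v : EuclideanSpace ℝ (Fin n)) (k : Fin n),
        R v k = if k = j then -v k else v k := by
      intro v k
      rw [hR, LinearIsometryEquiv.piLpCongrRight_apply]
      by_cases h : k = j
      · subst h; simp [LinearIsometryEquiv.neg]; rfl
      · simp [h]
    have hmeq : ∫ v, v i * v j ∂σ = ∫ v, (R v) i * (R v) j ∂σ := by
      conv_lhs => rw [← hσ_rot R]
      rw [integral_map R.continuous.aemeasurable]
      rw [hσ_rot R]
      exact (hijcont i j).aestronglyMeasurable
    have : ∫ v, (R v) i * (R v) j ∂σ = -∫ v, v i * v j ∂σ := by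
      rw [← integral_neg]
      refine integral_congr_ae (Filter.Eventually.of_forall fun v => ?_)
      show R v i * R v j = -(v i * v j)
      rw [hRapp, hRapp, if_neg hij, if_pos rfl]
      ring
    rw [this] at hmeq
    linarith
  -- diagonal moments are all equal
  have hswap : ∀ i j : Fin n, ∫ v, v i * v i ∂σ = ∫ v, v j * v j ∂σ := by
    intro i j
    set R : EuclideanSpace ℝ (Fin n) ≃ₗᵢ[ℝ] EuclideanSpace ℝ (Fin n) :=
      LinearIsometryEquiv.piLpCongrLeft 2 ℝ ℝ (Equiv.swap i j) with hR
    have hRapp : ∀ v : EuclideanSpace ℝ (Fin n), R v i = v j := by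
      intro v
      rw [hR, LinearIsometryEquiv.piLpCongrLeft_apply]
      simp only [Equiv.piCongrLeft'_apply]
      simp only [Equiv.symm_swap]
      exact congrArg v (Equiv.swap_apply_left i j)
    have hmeq : ∫ v, v i * v i ∂σ = ∫ v, (R v) i * (R v) i ∂σ := by
      conv_lhs => rw [← hσ_rot R]
      rw [integral_map R.continuous.aemeasurable]
      rw [hσ_rot R]
      exact (hijcont i i).aestronglyMeasurable
    rw [hmeq]
    refine integral_congr_ae (Filter.Eventually.of_forall fun v => ?_)
    show R v i * R v i = v j * v j
    rw [hRapp]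
  have hnpos : (0 : ℝ) < n := by exact_mod_cast hn
  have hdiag : ∀ i : Fin n, ∫ v, v i * v i ∂σ = α ^ 2 / n := by
    intro i
    have hsum : ∫ v, ∑ k, v k * v k ∂σ = α ^ 2 := by
      have hae : ∀ᵐ v ∂σ, (∑ k, v k * v k) = α ^ 2 := by
        refine hσ_sphere.mono fun v hv => ?_
        have h1 : (∑ k, v k * v k) = (inner ℝ v v : ℝ) := by
          simp only [PiLp.inner_apply, RCLike.inner_apply, conj_trivial]
        rw [h1, real_inner_self_eq_norm_sq, hv]
      rw [integral_congr_ae hae]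
      simp
    have hsum2 : ∫ v, ∑ k, v k * v k ∂σ = ∑ k : Fin n, ∫ v, v k * v k ∂σ :=
      integral_finset_sum _ (fun k _ => hijint k k)
    have hsum3 : (∑ k : Fin n, ∫ v, v k * v k ∂σ) = n * ∫ v, v i * v i ∂σ := by
      rw [Finset.sum_congr rfl (fun k _ => hswap k i)]
      simp [Finset.card_univ, mul_comm]
    rw [hsum2, hsum3] at hsum
    rw [eq_div_iff hnpos.ne']
    linarith
  -- main computation
  have hGcont : Continuous fun v : EuclideanSpace ℝ (Fin n) => (inner ℝ u v : ℝ) • v :=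
    by fun_prop
  have hGint : Integrable (fun v : EuclideanSpace ℝ (Fin n) => (inner ℝ u v : ℝ) • v) σ := by
    refine integrable_of_cont_bound σ hσ_sphere _ hGcont (‖u‖ * α * α) fun v hv => ?_
    rw [norm_smul, Real.norm_eq_abs]
    calc |(inner ℝ u v : ℝ)| * ‖v‖ ≤ ‖u‖ * ‖v‖ * ‖v‖ :=
          mul_le_mul_of_nonneg_right (abs_real_inner_le_norm u v) (norm_nonneg v)
      _ = ‖u‖ * α * α := by rw [hv]
  refine PiLp.ext fun j => ?_
  have hproj := (EuclideanSpace.proj j (𝕜 := ℝ)).integral_comp_comm hGint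
  have hLHS : (∫ v, (inner ℝ u v : ℝ) • v ∂σ) j = ∫ v, (inner ℝ u v : ℝ) * v j ∂σ := by
    calc (∫ v, (inner ℝ u v : ℝ) • v ∂σ) j
        = EuclideanSpace.proj j (𝕜 := ℝ) (∫ v, (inner ℝ u v : ℝ) • v ∂σ) := rfl
      _ = ∫ v, EuclideanSpace.proj j (𝕜 := ℝ) ((inner ℝ u v : ℝ) • v) ∂σ := hproj.symm
      _ = ∫ v, (inner ℝ u v : ℝ) * v j ∂σ := by simp [smul_eq_mul]
  rw [hLHS]
  have hexp : ∀ v : EuclideanSpace ℝ (Fin n),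
      (inner ℝ u v : ℝ) * v j = ∑ i, u i * (v i * v j) := by
    intro v
    have h1 : (inner ℝ u v : ℝ) = ∑ i, u i * v i := by
      simp [PiLp.inner_apply, RCLike.inner_apply, mul_comm]
    rw [h1, Finset.sum_mul]
    exact Finset.sum_congr rfl fun i _ => by ring
  rw [integral_congr_ae (Filter.Eventually.of_forall hexp)]
  rw [integral_finset_sum _ (fun i _ => (hijint i j).const_mul (u i))]
  have : ∀ i : Fin n, ∫ v, u i * (v i * v j) ∂σ = u i * ∫ v, v i * v j ∂σ :=
    fun i => integral_const_mul _ _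
  rw [Finset.sum_congr rfl fun i _ => this i]
  rw [Finset.sum_eq_single j]
  · rw [hdiag j]
    simp [PiLp.smul_apply, smul_eq_mul]
    ring
  · intro i _ hij
    rw [hoff i j hij, mul_zero]
  · intro h; exact absurd (Finset.mem_univ j) h

/-- For an `L`-smooth `f : ℝⁿ → ℝ` and the two-point zeroth-order gradient
estimator `g(v) = (n/(2α²μ))·(f(p+μv) − f(p−μv)) • v`, the cross term for two independent
samples `v, w ∼ σ` satisfies
`∫∫ ⟨g(v), g(w)⟩ dσ(v) dσ(w) ≤ ‖∇f(p)‖² + ‖∇f(p)‖·L·n^{3/2}·α·μ + L²n³α²μ²/4`. -/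
theorem gw_estimator_cross_term
    (n : ℕ) (hn : 1 ≤ n) (α μ L : ℝ) (hα : 0 < α) (hμ : 0 < μ) (hL : 0 ≤ L)
    (σ : Measure (EuclideanSpace ℝ (Fin n))) [IsProbabilityMeasure σ]
    (hσ_sphere : ∀ᵐ v ∂σ, ‖v‖ = α)
    (hσ_rot : ∀ R : EuclideanSpace ℝ (Fin n) ≃ₗᵢ[ℝ] EuclideanSpace ℝ (Fin n),
      Measure.map R σ = σ)
    (f : EuclideanSpace ℝ (Fin n) → ℝ)
    (hf_diff : Differentiable ℝ f)
    (hf_smooth : ∀ x y, ‖gradient f x - gradient f y‖ ≤ L * ‖x - y‖)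
    (p : EuclideanSpace ℝ (Fin n))
    (g : EuclideanSpace ℝ (Fin n) → EuclideanSpace ℝ (Fin n))
    (hg : ∀ v, g v = ((n : ℝ) / (2 * α ^ 2 * μ) * (f (p + μ • v) - f (p - μ • v))) • v) :
    ∫ v, ∫ w, (inner ℝ (g v) (g w) : ℝ) ∂σ ∂σ
      ≤ ‖gradient f p‖ ^ 2 + ‖gradient f p‖ * L * (n : ℝ) ^ ((3 : ℝ) / 2) * α * μ
          + L ^ 2 * (n : ℝ) ^ 3 * α ^ 2 * μ ^ 2 / 4 := by
  have hnpos : (0 : ℝ) < n := by exact_mod_cast hn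
  set A := ‖gradient f p‖ with hA
  have hA0 : 0 ≤ A := norm_nonneg _
  have hfc : Continuous f := hf_diff.continuous
  have hgeq : g = fun v => ((n : ℝ) / (2 * α ^ 2 * μ) * (f (p + μ • v) - f (p - μ • v))) • v :=
    funext hg
  have hgcont : Continuous g := by
    rw [hgeq]; fun_prop
  set h : EuclideanSpace ℝ (Fin n) → EuclideanSpace ℝ (Fin n) :=
    fun v => ((n : ℝ) / α ^ 2 * (inner ℝ (gradient f p) v : ℝ)) • v with hh
  have hhcont : Continuous h := by
    rw [hh]
    fun_prop
  -- pointwise deviation bound on the sphere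
  have hquad : ∀ v : EuclideanSpace ℝ (Fin n), ‖v‖ = α → ‖g v - h v‖ ≤ L * n * μ * α / 2 := by
    intro v hv
    have e1 := smooth_quad_bound hL f hf_diff hf_smooth p (μ • v)
    have e2 := smooth_quad_bound hL f hf_diff hf_smooth p (-(μ • v))
    have hnormμv : ‖μ • v‖ = μ * α := by
      rw [norm_smul, Real.norm_eq_abs, abs_of_pos hμ, hv]
    rw [hnormμv] at e1
    rw [norm_neg, hnormμv] at e2
    have hsub : p + -(μ • v) = p - μ • v := by rw [sub_eq_add_neg]
    rw [hsub] at e2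
    have hinner : (inner ℝ (gradient f p) (μ • v) : ℝ) = μ * inner ℝ (gradient f p) v :=
      real_inner_smul_right _ _ _
    have hinner2 : (inner ℝ (gradient f p) (-(μ • v)) : ℝ) = -(μ * inner ℝ (gradient f p) v) := by
      rw [inner_neg_right, hinner]
    rw [hinner] at e1
    rw [hinner2] at e2
    have hdiff : |f (p + μ • v) - f (p - μ • v) - 2 * μ * inner ℝ (gradient f p) v|
        ≤ L * μ ^ 2 * α ^ 2 := by
      have habs := abs_sub (f (p + μ • v) - f p - μ * inner ℝ (gradient f p) v)
        (f (p - μ • v) - f p - -(μ * inner ℝ (gradient f p) v))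
      have heq : (f (p + μ • v) - f p - μ * inner ℝ (gradient f p) v)
          - (f (p - μ • v) - f p - -(μ * inner ℝ (gradient f p) v))
          = f (p + μ • v) - f (p - μ • v) - 2 * μ * inner ℝ (gradient f p) v := by ring
      rw [heq] at habs
      calc |f (p + μ • v) - f (p - μ • v) - 2 * μ * inner ℝ (gradient f p) v|
          ≤ L / 2 * (μ * α) ^ 2 + L / 2 * (μ * α) ^ 2 := habs.trans (add_le_add e1 e2)
        _ = L * μ ^ 2 * α ^ 2 := by ring
    have hc : g v - h v = ((n : ℝ) / (2 * α ^ 2 * μ)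
        * (f (p + μ • v) - f (p - μ • v) - 2 * μ * inner ℝ (gradient f p) v)) • v := by
      rw [hg v, hh, ← sub_smul]
      congr 1
      field_simp
    rw [hc, norm_smul, Real.norm_eq_abs, hv, abs_mul]
    have hcoefpos : (0:ℝ) < (n : ℝ) / (2 * α ^ 2 * μ) := by positivity
    rw [abs_of_pos hcoefpos]
    calc (n : ℝ) / (2 * α ^ 2 * μ)
          * |f (p + μ • v) - f (p - μ • v) - 2 * μ * inner ℝ (gradient f p) v| * α
        ≤ (n : ℝ) / (2 * α ^ 2 * μ) * (L * μ ^ 2 * α ^ 2) * α := by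
          gcongr
      _ = L * n * μ * α / 2 := by field_simp
  -- norm bounds
  have hhb : ∀ v : EuclideanSpace ℝ (Fin n), ‖v‖ = α → ‖h v‖ ≤ n * A := by
    intro v hv
    rw [hh]
    simp only
    rw [norm_smul, Real.norm_eq_abs, hv, abs_mul]
    have h1 : |(inner ℝ (gradient f p) v : ℝ)| ≤ A * α := by
      rw [← hv]; exact abs_real_inner_le_norm _ _
    have h2 : |(n : ℝ) / α ^ 2| = (n : ℝ) / α ^ 2 := abs_of_pos (by positivity)
    rw [h2]
    calc (n : ℝ) / α ^ 2 * |(inner ℝ (gradient f p) v : ℝ)| * α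
        ≤ (n : ℝ) / α ^ 2 * (A * α) * α := by gcongr
      _ = n * A := by field_simp
  have hgb : ∀ v : EuclideanSpace ℝ (Fin n), ‖v‖ = α →
      ‖g v‖ ≤ n * A + L * n * μ * α / 2 := by
    intro v hv
    calc ‖g v‖ = ‖h v + (g v - h v)‖ := by congr 1; abel
      _ ≤ ‖h v‖ + ‖g v - h v‖ := norm_add_le _ _
      _ ≤ n * A + L * n * μ * α / 2 := add_le_add (hhb v hv) (hquad v hv)
  have hgint : Integrable g σ :=
    integrable_of_cont_bound σ hσ_sphere g hgcont _ hgb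
  have hhint : Integrable h σ :=
    integrable_of_cont_bound σ hσ_sphere h hhcont (n * A) hhb
  -- mean of h is the gradient
  have hhintval : ∫ v, h v ∂σ = gradient f p := by
    have heq : h = fun v => ((n : ℝ) / α ^ 2) • ((inner ℝ (gradient f p) v : ℝ) • v) :=
      funext fun v => by rw [hh]; simp only; rw [smul_smul]
    rw [heq, integral_smul, sphere_second_moment hn hα σ hσ_sphere hσ_rot (gradient f p),
      smul_smul]
    have : (n : ℝ) / α ^ 2 * (α ^ 2 / n) = 1 := by field_simp
    rw [this, one_smul]
  set m := ∫ v, g v ∂σ with hm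
  have hmd : ‖m - gradient f p‖ ≤ L * n * μ * α / 2 := by
    have heq : m - gradient f p = ∫ v, (g v - h v) ∂σ := by
      rw [integral_sub hgint hhint, hhintval]
    rw [heq]
    have hb : ∀ᵐ v ∂σ, ‖g v - h v‖ ≤ L * n * μ * α / 2 :=
      hσ_sphere.mono fun v hv => hquad v hv
    calc ‖∫ v, (g v - h v) ∂σ‖ ≤ L * n * μ * α / 2 * (σ Set.univ).toReal :=
          norm_integral_le_of_norm_le_const hb
      _ = L * n * μ * α / 2 := by simp
  have hmA : ‖m‖ ≤ A + L * n * μ * α / 2 := by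
    have h1 := norm_sub_norm_le m (gradient f p)
    rw [← hA] at h1
    linarith [h1.trans hmd]
  -- double integral equals ‖m‖²
  have hdouble : ∫ v, ∫ w, (inner ℝ (g v) (g w) : ℝ) ∂σ ∂σ = ‖m‖ ^ 2 := by
    have h1 : ∀ v, ∫ w, (inner ℝ (g v) (g w) : ℝ) ∂σ = inner ℝ (g v) m := fun v =>
      integral_inner hgint (g v)
    rw [integral_congr_ae (Filter.Eventually.of_forall h1)]
    have h2 : ∀ v, (inner ℝ (g v) m : ℝ) = inner ℝ m (g v) := fun v => real_inner_comm _ _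
    rw [integral_congr_ae (Filter.Eventually.of_forall h2), integral_inner hgint m,
      real_inner_self_eq_norm_sq]
  rw [hdouble]
  -- rpow bookkeeping and conclusion
  set N := (n : ℝ) ^ ((3 : ℝ) / 2) with hN
  have hn1 : (1 : ℝ) ≤ n := by exact_mod_cast hn
  have hNn : (n : ℝ) ≤ N := by
    calc (n : ℝ) = (n : ℝ) ^ (1 : ℝ) := (Real.rpow_one _).symm
      _ ≤ N := Real.rpow_le_rpow_of_exponent_le hn1 (by norm_num)
  have hN0 : 0 ≤ N := le_trans (by linarith) hNn
  have hN2 : N ^ 2 = (n : ℝ) ^ 3 := by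
    rw [hN, ← Real.rpow_natCast ((n : ℝ) ^ ((3 : ℝ) / 2)) 2,
      ← Real.rpow_mul (by positivity), ← Real.rpow_natCast (n : ℝ) 3]
    norm_num
  have hmB : ‖m‖ ≤ A + L * N * μ * α / 2 := by
    have : L * n * μ * α / 2 ≤ L * N * μ * α / 2 := by gcongr
    linarith
  have hm0 : 0 ≤ ‖m‖ := norm_nonneg _
  calc ‖m‖ ^ 2 ≤ (A + L * N * μ * α / 2) ^ 2 := by
        have := pow_le_pow_left₀ hm0 hmB 2
        simpa using this
    _ = A ^ 2 + A * L * N * α * μ + L ^ 2 * N ^ 2 * α ^ 2 * μ ^ 2 / 4 := by ring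
    _ = A ^ 2 + A * L * N * α * μ + L ^ 2 * (n : ℝ) ^ 3 * α ^ 2 * μ ^ 2 / 4 := by rw [hN2]
end
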